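/- Let H be the group of all functions s : ℕ → ℤ under pointwise addition, linearly ordered by: s > 0 iff s(min supp(s)) > 0, where supp(s) = {k ∈ ℕ : s(k) ≠ 0} and min is taken with respect to the usual order on ℕ. Let a ∈ H be the constant function with value 2, and let G be the subgroup of H generated by all finitely supported functions together with a. Then a is not 2-divisible in G (there is no h ∈ G with 2·h = a), but for every b ∈ G with b > 0 there exists g ∈ G with |a − 2·g| < b. In particular, G is not closed in its divisible hull. -/

import Mathlib

/-- The Hahn product over `ω` of copies of `ℤ`: all functions `ℕ → ℤ` with pointwise
addition, ordered lexicographically (`s > 0` iff `s (min supp s) > 0`). -/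
noncomputable abbrev HahnProdNatInt : Type := Lex (ℕ → ℤ)

/-- The constant function with value `2`. -/
noncomputable def constTwo : HahnProdNatInt := toLex (fun _ => (2 : ℤ))

/-- The subgroup generated by the finitely supported functions together with `constTwo`. -/
noncomputable def mixedGroup : AddSubgroup HahnProdNatInt :=
  AddSubgroup.closure
    (insert constTwo {s : HahnProdNatInt | (Function.support (ofLex s)).Finite})

lemma hahn_lt_iff (x y : HahnProdNatInt) :
    x < y ↔ ∃ i, (∀ j, j < i → ofLex x j = ofLex y j) ∧ ofLex x i < ofLex y i := Iff.rfl

lemma mem_mixed {s : HahnProdNatInt} (hs : s ∈ mixedGroup) :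
    ∃ n : ℤ, {k : ℕ | ofLex s k ≠ 2 * n}.Finite := by
  induction hs using AddSubgroup.closure_induction with
  | mem x hx =>
    rcases hx with rfl | hx
    · exact ⟨1, by simp [constTwo]⟩
    · exact ⟨0, by simpa [Function.support] using hx⟩
  | zero =>
    refine ⟨0, Set.finite_empty.subset ?_⟩
    intro k hk
    exact absurd (by show (0:ℤ) = 2 * 0; ring) hk
  | add x y _ _ hx hy =>
    obtain ⟨n, hn⟩ := hx; obtain ⟨m, hm⟩ := hy
    refine ⟨n + m, (hn.union hm).subset ?_⟩
    intro k hk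
    simp only [Set.mem_setOf_eq, Set.mem_union]
    by_contra hc
    push_neg at hc
    exact hk (by show ofLex x k + ofLex y k = _; rw [hc.1, hc.2]; ring)
  | neg x _ hx =>
    obtain ⟨n, hn⟩ := hx
    refine ⟨-n, hn.subset ?_⟩
    intro k hk hc
    exact hk (by show -ofLex x k = 2 * -n; rw [hc]; ring)

theorem stmt5 :
    (¬ ∃ h ∈ mixedGroup, 2 • h = constTwo) ∧
      ∀ b ∈ mixedGroup, 0 < b → ∃ g ∈ mixedGroup, |constTwo - 2 • g| < b := by
  constructor
  · rintro ⟨h, hmem, heq⟩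
    have hpt : ∀ k, ofLex h k = 1 := by
      intro k
      have := congrArg (fun s : HahnProdNatInt => ofLex s k) heq
      have h2 : ofLex h k + ofLex h k = 2 := by
        simp [constTwo, two_smul] at this; exact this
      omega
    obtain ⟨n, hn⟩ := mem_mixed hmem
    have : Set.univ ⊆ {k : ℕ | ofLex h k ≠ 2 * n} := by
      intro k _
      simp only [Set.mem_setOf_eq, hpt k]
      omega
    exact Set.infinite_univ (hn.subset this)
  · intro b hb hpos
    rw [hahn_lt_iff] at hpos
    obtain ⟨i, hi0, hipos⟩ := hpos
    set g : HahnProdNatInt := toLex (fun k => if k ≤ i then (1:ℤ) else 0) with hg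
    have hgmem : g ∈ mixedGroup := by
      apply AddSubgroup.subset_closure
      right
      refine Set.Finite.subset (Set.finite_Iic i) ?_
      intro k hk
      simp only [Function.mem_support, hg, ofLex_toLex] at hk
      by_contra h
      simp only [Set.mem_Iic, not_le] at h
      simp [Nat.not_le.mpr h] at hk
    refine ⟨g, hgmem, ?_⟩
    set c : HahnProdNatInt := constTwo - 2 • g with hcdef
    have hc : ∀ k, ofLex c k = if k ≤ i then 0 else 2 := by
      intro k
      show (2 : ℤ) - 2 • (if k ≤ i then (1:ℤ) else 0) = _
      by_cases h : k ≤ i <;> simp [h]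
    have hcpos : (0:HahnProdNatInt) ≤ c := by
      refine le_of_lt ?_
      refine (hahn_lt_iff _ _).mpr ?_
      refine ⟨i+1, fun j hj => ?_, ?_⟩
      · rw [hc j, if_pos (Nat.lt_succ_iff.mp hj)]; rfl
      · rw [hc (i+1), if_neg (by omega)]; show (0:ℤ) < 2; norm_num
    rw [abs_of_nonneg hcpos, hahn_lt_iff]
    exact ⟨i, fun j hj => by rw [hc j, if_pos (le_of_lt hj)]; exact hi0 j hj,
      by rw [hc i, if_pos le_rfl]; exact hipos⟩
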